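/- Let F_B, F_S : [0,1] → [0,1] be nondecreasing, let v ∈ [0,1], and define u_B(p) = (v − p)·F_B(p), G_λ(p) = λ + (1 − λ)·F_S(p), and u_λ(p) = u_B(p)·G_λ(p) for p ∈ [0,1] and λ ∈ [0,1]. Assume that for every λ ∈ [0,1] the function u_λ has a unique maximizer p_λ* over [0,1]. Then for all 0 ≤ λ1 ≤ λ2 ≤ 1 one has p_{λ1}* ≥ p_{λ2}*; in particular p_1* ≤ p_λ* ≤ p_0* for every λ ∈ [0,1]. -/
import Mathlib


open Set

/-- **Single-peaked case: the unique optimizer moves monotonically with contamination.**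
With `u_λ(p) = (v - p) F_B(p) (λ + (1-λ) F_S(p))`, if for each `λ ∈ [0,1]` the function
`u_λ` has a unique maximizer `pstar λ` over `[0,1]`, then `pstar` is antitone on `[0,1]`;
in particular `pstar 1 ≤ pstar λ ≤ pstar 0` for every `λ ∈ [0,1]`. -/
theorem mixture_single_peaked
    (FB FS : ℝ → ℝ) (v : ℝ)
    (hFBmono : MonotoneOn FB (Icc 0 1)) (hFSmono : MonotoneOn FS (Icc 0 1))
    (hFBrange : ∀ p ∈ Icc (0:ℝ) 1, FB p ∈ Icc (0:ℝ) 1)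
    (hFSrange : ∀ p ∈ Icc (0:ℝ) 1, FS p ∈ Icc (0:ℝ) 1)
    (hv : v ∈ Icc (0:ℝ) 1)
    (uB : ℝ → ℝ) (huB : ∀ p, uB p = (v - p) * FB p)
    (G : ℝ → ℝ → ℝ) (hG : ∀ lam p, G lam p = lam + (1 - lam) * FS p)
    (u : ℝ → ℝ → ℝ) (hu : ∀ lam p, u lam p = uB p * G lam p)
    (pstar : ℝ → ℝ)
    (hpstar_mem : ∀ lam ∈ Icc (0:ℝ) 1, pstar lam ∈ Icc (0:ℝ) 1)
    (hpstar_max : ∀ lam ∈ Icc (0:ℝ) 1, ∀ q ∈ Icc (0:ℝ) 1, u lam q ≤ u lam (pstar lam))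
    (hpstar_unique : ∀ lam ∈ Icc (0:ℝ) 1, ∀ p ∈ Icc (0:ℝ) 1,
      (∀ q ∈ Icc (0:ℝ) 1, u lam q ≤ u lam p) → p = pstar lam) :
    (∀ lam1 lam2 : ℝ, 0 ≤ lam1 → lam1 ≤ lam2 → lam2 ≤ 1 → pstar lam2 ≤ pstar lam1) ∧
    (∀ lam ∈ Icc (0:ℝ) 1, pstar 1 ≤ pstar lam ∧ pstar lam ≤ pstar 0) := by
  have h0mem : (0:ℝ) ∈ Icc (0:ℝ) 1 := ⟨le_refl 0, zero_le_one⟩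
  have key : ∀ lam1 lam2 : ℝ, 0 ≤ lam1 → lam1 ≤ lam2 → lam2 ≤ 1 → pstar lam2 ≤ pstar lam1 := by
    intro l1 l2 h0 h12 h21
    rcases eq_or_lt_of_le h12 with rfl | hlt
    · exact le_refl _
    by_contra hcon
    push_neg at hcon
    have hl1 : l1 ∈ Icc (0:ℝ) 1 := ⟨h0, le_trans h12 h21⟩
    have hl2 : l2 ∈ Icc (0:ℝ) 1 := ⟨le_trans h0 h12, h21⟩
    set p1 := pstar l1 with hp1def
    set p2 := pstar l2 with hp2def
    have hp1 : p1 ∈ Icc (0:ℝ) 1 := hpstar_mem l1 hl1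
    have hp2 : p2 ∈ Icc (0:ℝ) 1 := hpstar_mem l2 hl2
    have hb : u l2 p1 ≤ u l2 p2 := hpstar_max l2 hl2 p1 hp1
    have ha : u l1 p2 < u l1 p1 := by
      rcases lt_or_eq_of_le (hpstar_max l1 hl1 p2 hp2) with h | h
      · exact h
      · exfalso
        have heq : p2 = p1 :=
          hpstar_unique l1 hl1 p2 hp2 (fun q hq => h ▸ hpstar_max l1 hl1 q hq)
        exact absurd heq (ne_of_gt hcon)
    have hFS1 := hFSrange p1 hp1
    have hFS2 := hFSrange p2 hp2
    have hFS0 := hFSrange 0 h0mem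
    have hFB0 := hFBrange 0 h0mem
    have hGnn : ∀ lam ∈ Icc (0:ℝ) 1, ∀ p ∈ Icc (0:ℝ) 1, 0 ≤ G lam p := by
      intro lam hlam p hp
      have := hFSrange p hp
      rw [hG]
      nlinarith [hlam.1, hlam.2, this.1, this.2]
    have hl2pos : 0 < l2 := lt_of_le_of_lt h0 hlt
    have hG2pos : ∀ p ∈ Icc (0:ℝ) 1, 0 < G l2 p := by
      intro p hp
      have := hFSrange p hp
      rw [hG]
      nlinarith [hl2.2, this.1]
    rcases le_or_gt (uB p2) 0 with hub2 | hub2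
    · -- then 0 is a maximizer for l2, so p2 = 0, contradicting p1 < p2
      have h1 : u l2 p2 ≤ 0 := by
        rw [hu]; exact mul_nonpos_of_nonpos_of_nonneg hub2 (hGnn l2 hl2 p2 hp2)
      have h2 : 0 ≤ u l2 0 := by
        rw [hu, huB]
        exact mul_nonneg (mul_nonneg (by linarith [hv.1]) hFB0.1) (hGnn l2 hl2 0 h0mem)
      have h3 : ∀ q ∈ Icc (0:ℝ) 1, u l2 q ≤ u l2 0 :=
        fun q hq => le_trans (le_trans (hpstar_max l2 hl2 q hq) h1) h2
      have h4 : (0:ℝ) = pstar l2 := hpstar_unique l2 hl2 0 h0mem h3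
      have h5 : p2 = 0 := hp2def.trans h4.symm
      linarith [hp1.1]
    · have hG1nn1 : 0 ≤ G l1 p1 := hGnn l1 hl1 p1 hp1
      have hG1nn2 : 0 ≤ G l1 p2 := hGnn l1 hl1 p2 hp2
      have hG2p1 : 0 < G l2 p1 := hG2pos p1 hp1
      have hG2p2 : 0 < G l2 p2 := hG2pos p2 hp2
      have hA : uB p2 * G l1 p2 < uB p1 * G l1 p1 := by
        rw [hu, hu] at ha; exact ha
      have hB : uB p1 * G l2 p1 ≤ uB p2 * G l2 p2 := by
        rw [hu, hu] at hb; exact hb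
      have hub1 : 0 < uB p1 := by
        by_contra h
        push_neg at h
        have h1 : uB p1 * G l1 p1 ≤ 0 := mul_nonpos_of_nonpos_of_nonneg h hG1nn1
        nlinarith [mul_nonneg hub2.le hG1nn2]
      have hsub : G l1 p1 * G l2 p2 ≤ G l2 p1 * G l1 p2 := by
        have hs : FS p1 ≤ FS p2 := hFSmono hp1 hp2 hcon.le
        rw [hG, hG, hG, hG]
        nlinarith [hlt]
      nlinarith [mul_lt_mul_of_pos_right hA hG2p2,
        mul_le_mul_of_nonneg_right hB hG1nn2,
        mul_le_mul_of_nonneg_left hsub hub1.le]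
  refine ⟨key, fun lam hlam => ⟨key lam 1 hlam.1 hlam.2 le_rfl, key 0 lam le_rfl hlam.1 hlam.2⟩⟩
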